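/- arXiv:1809.07754 — 3 statements merged into one kernel-verified Lean document; each statement's English description precedes it below -/
import Mathlib

section
/- The Laplace mechanism satisfies ε-differential privacy: given a query f : D → ℝ with L1 sensitivity Δ(f), the mechanism that outputs f(D) + Z, where Z is drawn from the Laplace distribution with density (ε/(2Δ)) · exp(-ε|z|/Δ), satisfies ε-differential privacy. -/
open MeasureTheory Real

/-- The Laplace mechanism satisfies ε-differential privacy: given a query
`f : D → ℝ` with L1 sensitivity `Δ`, the mechanism outputting `f(D) + Z` with `Z` drawn
from the Laplace distribution with density `(ε/(2Δ)) exp(-ε|z|/Δ)` satisfies ε-DP. -/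
theorem laplace_mechanism_dp {Dset : Type*} (Neighbor : Dset → Dset → Prop)
    (f : Dset → ℝ) (Δ ε : ℝ) (hΔ : 0 < Δ) (hε : 0 < ε)
    (hsens : ∀ D D', Neighbor D D' → |f D - f D'| ≤ Δ)
    (lap : Measure ℝ)
    (hlap : lap = volume.withDensity fun z =>
      ENNReal.ofReal (ε / (2 * Δ) * Real.exp (-(ε * |z|) / Δ)))
    (M : Dset → Measure ℝ) (hM : ∀ D, M D = lap.map (fun z => f D + z)) :
    ∀ D D', Neighbor D D' → ∀ S : Set ℝ, MeasurableSet S →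
      M D S ≤ ENNReal.ofReal (Real.exp ε) * M D' S := by
  intro D D' hN S hS
  set g : ℝ → ℝ → ENNReal := fun c x =>
    ENNReal.ofReal (ε / (2 * Δ) * Real.exp (-(ε * |x - c|) / Δ)) with hg
  have hmeas : ∀ c, Measurable (g c) := by
    intro c
    apply Measurable.ennreal_ofReal
    fun_prop
  have key : ∀ c : ℝ, (lap.map (fun z => c + z)) S = ∫⁻ x in S, g c x := by
    intro c
    have hmp : MeasurePreserving (fun z : ℝ => c + z) volume volume :=
      measurePreserving_add_left volume c
    rw [hlap, Measure.map_apply (by fun_prop) hS,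
      withDensity_apply _ ((measurable_const_add c) hS)]
    calc ∫⁻ z in (fun z => c + z) ⁻¹' S,
          ENNReal.ofReal (ε / (2 * Δ) * Real.exp (-(ε * |z|) / Δ)) ∂volume
        = ∫⁻ z in (fun z => c + z) ⁻¹' S, g c ((fun z => c + z) z) ∂volume := by
          apply setLIntegral_congr_fun (measurable_const_add c hS)
          intro z _
          simp [hg]
      _ = ∫⁻ x in S, g c x ∂(Measure.map (fun z => c + z) volume) :=
          (setLIntegral_map hS (hmeas c) (by fun_prop)).symm
      _ = ∫⁻ x in S, g c x := by rw [hmp.map_eq]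
  have hpt : ∀ x, g (f D) x ≤ ENNReal.ofReal (Real.exp ε) * g (f D') x := by
    intro x
    rw [hg]
    simp only
    rw [← ENNReal.ofReal_mul (le_of_lt (Real.exp_pos ε))]
    apply ENNReal.ofReal_le_ofReal
    have hd := hsens D D' hN
    have htri : |x - f D'| ≤ |x - f D| + |f D - f D'| := by
      have := abs_sub_le x (f D) (f D')
      linarith
    have hexp : -(ε * |x - f D|) / Δ ≤ ε + -(ε * |x - f D'|) / Δ := by
      rw [div_le_iff₀ hΔ]
      have heq : (ε + -(ε * |x - f D'|) / Δ) * Δ = ε * Δ - ε * |x - f D'| := by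
        field_simp; ring
      rw [heq]
      nlinarith [abs_nonneg (x - f D), abs_nonneg (x - f D')]
    have hc : 0 ≤ ε / (2 * Δ) := by positivity
    calc ε / (2 * Δ) * Real.exp (-(ε * |x - f D|) / Δ)
        ≤ ε / (2 * Δ) * Real.exp (ε + -(ε * |x - f D'|) / Δ) := by
          apply mul_le_mul_of_nonneg_left (Real.exp_le_exp.mpr hexp) hc
      _ = Real.exp ε * (ε / (2 * Δ) * Real.exp (-(ε * |x - f D'|) / Δ)) := by
          rw [Real.exp_add]; ring
  rw [hM D, hM D', key (f D), key (f D')]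
  calc ∫⁻ x in S, g (f D) x
      ≤ ∫⁻ x in S, ENNReal.ofReal (Real.exp ε) * g (f D') x :=
        lintegral_mono fun x => hpt x
    _ = ENNReal.ofReal (Real.exp ε) * ∫⁻ x in S, g (f D') x := by
        rw [lintegral_const_mul _ (hmeas (f D'))]
end

section
/- Inverse-CDF sampling for the Laplace distribution: if p is uniformly distributed on the open interval (0,1), then the random variable L = -(1/ε) · sgn(p - 1/2) · ln(1 - 2|p - 1/2|) has the Laplace distribution with mean 0 and scale 1/ε, i.e., its density is (ε/2) · exp(-ε|x|). -/
open MeasureTheory Real Set Filter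

lemma laplace_measurable_sign : Measurable Real.sign := by
  have : Real.sign = fun x : ℝ => if x < 0 then (-1 : ℝ) else if 0 < x then 1 else 0 := by
    funext x; rfl
  rw [this]
  exact Measurable.ite measurableSet_Iio measurable_const
    (Measurable.ite measurableSet_Ioi measurable_const measurable_const)

lemma laplace_lint_Iic (ε : ℝ) (hε : 0 < ε) (b : ℝ) (hb : b ≤ 0) :
    ∫⁻ x in Iic b, ENNReal.ofReal (ε / 2 * Real.exp (-(ε * |x|)))
      = ENNReal.ofReal (Real.exp (ε * b) / 2) := by
  have hcongr : ∫⁻ x in Iic b, ENNReal.ofReal (ε / 2 * Real.exp (-(ε * |x|)))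
      = ∫⁻ x in Iic b, ENNReal.ofReal (ε / 2 * Real.exp (ε * x)) := by
    refine setLIntegral_congr_fun measurableSet_Iic (fun x hx => ?_)
    have hx0 : x ≤ 0 := le_trans hx hb
    rw [abs_of_nonpos hx0]
    ring_nf
  rw [hcongr]
  have hint : IntegrableOn (fun x => ε / 2 * Real.exp (ε * x)) (Iic b) := by
    have m : MeasurableEmbedding fun x : ℝ => -x := (Homeomorph.neg ℝ).measurableEmbedding
    have h2 : IntegrableOn (fun x => Real.exp (ε * x)) (Iic b) := by
      rw [← Measure.map_neg_eq_self (volume : Measure ℝ), m.integrableOn_map_iff]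
      simp_rw [Function.comp_def, neg_preimage, neg_Iic]
      have heq : (fun x : ℝ => Real.exp (ε * -x)) = fun x => Real.exp (-ε * x) := by
        funext x; ring_nf
      rw [heq]
      exact (integrableOn_Ici_iff_integrableOn_Ioi).mpr (exp_neg_integrableOn_Ioi (-b) hε)
    exact h2.const_mul _
  rw [← ofReal_integral_eq_lintegral_ofReal hint (ae_of_all _ fun x => by positivity)]
  congr 1
  have hderiv : ∀ x ∈ Iic b, HasDerivAt (fun y => Real.exp (ε * y) / 2)
      (ε / 2 * Real.exp (ε * x)) x := by
    intro x _
    have h1 : HasDerivAt (fun y : ℝ => ε * y) ε x := by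
      simpa using (hasDerivAt_id x).const_mul ε
    have h3 := h1.exp.div_const 2
    exact h3.congr_deriv (by ring)
  have htend : Tendsto (fun y => Real.exp (ε * y) / 2) atBot (nhds 0) := by
    have h1 : Tendsto (fun y : ℝ => ε * y) atBot atBot :=
      Tendsto.const_mul_atBot hε tendsto_id
    have h2 := Real.tendsto_exp_atBot.comp h1
    simpa [Function.comp] using h2.div_const 2
  rw [integral_Iic_of_hasDerivAt_of_tendsto' hderiv hint htend]
  ring

lemma laplace_lint_Ioc (ε : ℝ) (hε : 0 < ε) (a : ℝ) (ha : 0 ≤ a) :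
    ∫⁻ x in Ioc 0 a, ENNReal.ofReal (ε / 2 * Real.exp (-(ε * |x|)))
      = ENNReal.ofReal (1 / 2 - Real.exp (-(ε * a)) / 2) := by
  have hcongr : ∫⁻ x in Ioc 0 a, ENNReal.ofReal (ε / 2 * Real.exp (-(ε * |x|)))
      = ∫⁻ x in Ioc 0 a, ENNReal.ofReal (ε / 2 * Real.exp (-(ε * x))) := by
    refine setLIntegral_congr_fun measurableSet_Ioc (fun x hx => ?_)
    rw [abs_of_pos hx.1]
  rw [hcongr]
  have hcont : Continuous fun x : ℝ => ε / 2 * Real.exp (-(ε * x)) := by fun_prop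
  have hint : IntegrableOn (fun x => ε / 2 * Real.exp (-(ε * x))) (Ioc 0 a) :=
    hcont.integrableOn_Ioc
  rw [← ofReal_integral_eq_lintegral_ofReal hint (ae_of_all _ fun x => by positivity)]
  congr 1
  rw [← intervalIntegral.integral_of_le ha]
  have hderiv : ∀ x ∈ uIcc (0:ℝ) a, HasDerivAt (fun y => -(Real.exp (-(ε * y)) / 2))
      (ε / 2 * Real.exp (-(ε * x))) x := by
    intro x _
    have h1 : HasDerivAt (fun y : ℝ => -(ε * y)) (-ε) x := by
      simpa using ((hasDerivAt_id x).const_mul ε).fun_neg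
    have h3 := (h1.exp.div_const 2).neg
    exact h3.congr_deriv (by ring)
  rw [intervalIntegral.integral_eq_sub_of_hasDerivAt hderiv (hcont.intervalIntegrable 0 a)]
  simp [Real.exp_zero]
  ring

/-- Inverse-CDF sampling for the Laplace distribution: if `p` is uniform on
`(0,1)`, then `L(p) = -(1/ε) sgn(p - 1/2) ln(1 - 2|p - 1/2|)` has the Laplace distribution
with mean 0 and scale `1/ε`, i.e., density `(ε/2) exp(-ε|x|)`. -/
theorem inverse_cdf_laplace_sampling (ε : ℝ) (hε : 0 < ε)
    (L : ℝ → ℝ)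
    (hL : ∀ p, L p = -(1 / ε) * Real.sign (p - 1/2) * Real.log (1 - 2 * |p - 1/2|)) :
    Measure.map L (volume.restrict (Set.Ioo (0:ℝ) 1)) =
      volume.withDensity (fun x => ENNReal.ofReal (ε / 2 * Real.exp (-(ε * |x|)))) := by
  -- measurability of L
  have hmeas : Measurable L := by
    have hfun : L = fun p => -(1 / ε) * Real.sign (p - 1/2) * Real.log (1 - 2 * |p - 1/2|) :=
      funext hL
    rw [hfun]
    refine Measurable.mul ?_ ?_
    · exact (measurable_const.mul
        (laplace_measurable_sign.comp ((measurable_id.sub measurable_const))))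
    · exact Real.measurable_log.comp
        (measurable_const.sub (((measurable_id.sub measurable_const).abs).const_mul 2))
  -- explicit formulas for L
  have hlow : ∀ p : ℝ, p < 1/2 → L p = Real.log (2 * p) / ε := by
    intro p hp
    have h : p - 1/2 < 0 := by linarith
    rw [hL, Real.sign_of_neg h, abs_of_neg h]
    have h2 : (1 : ℝ) - 2 * -(p - 1/2) = 2 * p := by ring
    rw [h2]; ring
  have hmid : L (1/2) = 0 := by
    rw [hL]; norm_num
  have hhigh : ∀ p : ℝ, 1/2 < p → L p = -(Real.log (2 * (1 - p)) / ε) := by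
    intro p hp
    have h : 0 < p - 1/2 := by linarith
    rw [hL, Real.sign_of_pos h, abs_of_pos h]
    have h2 : (1 : ℝ) - 2 * (p - 1/2) = 2 * (1 - p) := by ring
    rw [h2]; ring
  -- preimage sets
  have hA : ∀ a : ℝ, a < 0 → L ⁻¹' Iic a ∩ Ioo 0 1 = Ioc 0 (Real.exp (ε * a) / 2) := by
    intro a ha
    ext p
    simp only [mem_inter_iff, mem_preimage, mem_Iic, mem_Ioo, mem_Ioc]
    constructor
    · rintro ⟨hpa, hp0, hp1⟩
      have hp2 : p < 1/2 := by
        by_contra h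
        push_neg at h
        rcases eq_or_lt_of_le h with heq | hlt
        · rw [← heq, hmid] at hpa; linarith
        · rw [hhigh p hlt] at hpa
          have hlog : Real.log (2 * (1 - p)) < 0 :=
            Real.log_neg (by linarith) (by linarith)
          have : Real.log (2 * (1 - p)) / ε < 0 := div_neg_of_neg_of_pos hlog hε
          linarith
      refine ⟨hp0, ?_⟩
      rw [hlow p hp2] at hpa
      have h1 : Real.log (2 * p) ≤ ε * a := by
        rw [div_le_iff₀ hε] at hpa
        linarith [mul_comm a ε]
      have h2 : 2 * p ≤ Real.exp (ε * a) := by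
        calc 2 * p = Real.exp (Real.log (2 * p)) := (Real.exp_log (by linarith)).symm
          _ ≤ Real.exp (ε * a) := Real.exp_le_exp.mpr h1
      linarith
    · rintro ⟨hp0, hpa⟩
      have hexp : Real.exp (ε * a) < 1 :=
        Real.exp_lt_one_iff.mpr (mul_neg_of_pos_of_neg hε ha)
      have hp2 : p < 1/2 := by linarith
      refine ⟨?_, hp0, by linarith⟩
      rw [hlow p hp2]
      have h1 : Real.log (2 * p) ≤ ε * a := by
        rw [← Real.log_exp (ε * a)]
        exact Real.log_le_log (by linarith) (by linarith)
      rw [div_le_iff₀ hε]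
      linarith [mul_comm a ε]
  have hB : ∀ a : ℝ, 0 ≤ a → L ⁻¹' Iic a ∩ Ioo 0 1 = Ioc 0 (1 - Real.exp (-(ε * a)) / 2) := by
    intro a ha
    have hexp1 : Real.exp (-(ε * a)) ≤ 1 :=
      Real.exp_le_one_iff.mpr (neg_nonpos.mpr (mul_nonneg hε.le ha))
    have hexp0 : 0 < Real.exp (-(ε * a)) := Real.exp_pos _
    ext p
    simp only [mem_inter_iff, mem_preimage, mem_Iic, mem_Ioo, mem_Ioc]
    constructor
    · rintro ⟨hpa, hp0, hp1⟩
      refine ⟨hp0, ?_⟩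
      rcases le_or_gt p (1/2) with hp2 | hp2
      · linarith
      · rw [hhigh p hp2] at hpa
        have h0 : -a ≤ Real.log (2 * (1 - p)) / ε := by linarith
        rw [le_div_iff₀ hε] at h0
        have h1 : -(ε * a) ≤ Real.log (2 * (1 - p)) := by
          linarith [mul_comm a ε]
        have h2 : Real.exp (-(ε * a)) ≤ 2 * (1 - p) := by
          calc Real.exp (-(ε * a)) ≤ Real.exp (Real.log (2 * (1 - p))) :=
                Real.exp_le_exp.mpr h1
            _ = 2 * (1 - p) := Real.exp_log (by linarith)
        linarith
    · rintro ⟨hp0, hpa⟩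
      refine ⟨?_, hp0, by linarith⟩
      rcases le_or_gt p (1/2) with hp2 | hp2
      · rcases eq_or_lt_of_le hp2 with heq | hlt
        · rw [heq, hmid]; exact ha
        · rw [hlow p hlt]
          have hlog : Real.log (2 * p) ≤ 0 := Real.log_nonpos (by linarith) (by linarith)
          have : Real.log (2 * p) / ε ≤ 0 := div_nonpos_iff.mpr (Or.inr ⟨hlog, hε.le⟩)
          linarith
      · rw [hhigh p hp2]
        have h2 : Real.exp (-(ε * a)) ≤ 2 * (1 - p) := by linarith
        have h1 : -(ε * a) ≤ Real.log (2 * (1 - p)) := by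
          rw [← Real.log_exp (-(ε * a))]
          exact Real.log_le_log (Real.exp_pos _) h2
        rw [neg_le, le_div_iff₀ hε]
        linarith [mul_comm a ε]
  -- finiteness of the mapped measure
  haveI : IsFiniteMeasure (Measure.map L (volume.restrict (Set.Ioo (0:ℝ) 1))) := by
    constructor
    rw [Measure.map_apply hmeas MeasurableSet.univ, Set.preimage_univ,
      Measure.restrict_apply MeasurableSet.univ, Set.univ_inter, Real.volume_Ioo]
    simp
  refine Measure.ext_of_Iic _ _ fun a => ?_
  rw [Measure.map_apply hmeas measurableSet_Iic,
    Measure.restrict_apply (hmeas measurableSet_Iic),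
    withDensity_apply _ measurableSet_Iic]
  rcases lt_or_ge a 0 with ha | ha
  · rw [hA a ha, Real.volume_Ioc, laplace_lint_Iic ε hε a ha.le]
    norm_num
  · rw [hB a ha, Real.volume_Ioc,
      ← Set.Iic_union_Ioc_eq_Iic ha, lintegral_union measurableSet_Ioc (Set.Iic_disjoint_Ioc le_rfl),
      laplace_lint_Iic ε hε 0 le_rfl, laplace_lint_Ioc ε hε a ha]
    have hexp1 : Real.exp (-(ε * a)) ≤ 1 :=
      Real.exp_le_one_iff.mpr (neg_nonpos.mpr (mul_nonneg hε.le ha))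
    rw [← ENNReal.ofReal_add (by positivity) (by linarith)]
    congr 1
    simp [Real.exp_zero]
    ring
end

section
/- For Z ∼ Laplace(0, b) with b > 0 and true count c ≥ 0, the bias of the truncated mechanism equals E[max(c + Z, 0)] − c = (b/2) · exp(−c/b). In particular the bias tends to 0 as c → ∞ and equals b/2 when c = 0. -/
open MeasureTheory Real Filter Set

-- key integral lemma
theorem key (b : ℝ) (hb : 0 < b) (c : ℝ) (hc : 0 ≤ c) :
    (∫ z : ℝ, max (c + z) 0 * (1 / (2 * b) * Real.exp (-|z| / b)))
      = c + b / 2 * Real.exp (-c / b) := by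
  have hb' : b ≠ 0 := hb.ne'
  -- rewrite as indicator
  have h1 : (fun z : ℝ => max (c + z) 0 * (1 / (2 * b) * Real.exp (-|z| / b)))
      = Set.indicator (Ioi (-c)) (fun z => (c + z) * (1 / (2 * b) * Real.exp (-|z| / b))) := by
    ext z
    by_cases hz : z ∈ Ioi (-c)
    · rw [Set.indicator_of_mem hz]
      have : 0 ≤ c + z := by simp at hz; linarith
      rw [max_eq_left this]
    · rw [Set.indicator_of_notMem hz]
      have : c + z ≤ 0 := by simp at hz; linarith
      rw [max_eq_right this, zero_mul]
  rw [h1, integral_indicator measurableSet_Ioi]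
  have hsplit : Ioi (-c) = Ioc (-c) 0 ∪ Ioi (0:ℝ) := (Ioc_union_Ioi_eq_Ioi (by linarith)).symm
  -- the integrand on Ioi 0 equals simplified version
  have heq : EqOn (fun z : ℝ => (c + z) * (1 / (2 * b) * Real.exp (-|z| / b)))
      (fun z => (c + z) * (1 / (2 * b) * Real.exp (-z / b))) (Ioi 0) := by
    intro z hz; simp only; rw [abs_of_pos hz]
  -- antiderivative on Ioi 0
  set F : ℝ → ℝ := fun z => -(1 / (2 * b)) * ((c + z) * b + b ^ 2) * Real.exp (-z / b) with hF
  have hFderiv : ∀ x : ℝ, x ∈ Ici (0:ℝ) → HasDerivAt F ((c + x) * (1 / (2 * b) * Real.exp (-x / b))) x := by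
    intro x _
    have h1 : HasDerivAt (fun z : ℝ => -(1 / (2 * b)) * ((c + z) * b + b ^ 2)) (-(1 / (2 * b)) * b) x := by
      simpa using (((hasDerivAt_id x).const_add c).mul_const b |>.add_const (b^2)).const_mul (-(1 / (2 * b)))
    have h2 : HasDerivAt (fun z : ℝ => Real.exp (-z / b)) (Real.exp (-x / b) * (-1 / b)) x := by
      have : HasDerivAt (fun z : ℝ => -z / b) (-1 / b) x := by
        simpa using ((hasDerivAt_id x).neg.div_const b)
      exact (Real.hasDerivAt_exp (-x / b)).comp x this
    have := h1.mul h2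
    refine this.congr_deriv ?_
    field_simp
    ring
  have hFtend : Tendsto F atTop (nhds 0) := by
    have h1 : Tendsto (fun z : ℝ => z / b) atTop atTop :=
      tendsto_id.atTop_div_const hb
    have h2 : Tendsto (fun u : ℝ => -(1 / (2 * b)) * ((c + b * u) * b + b ^ 2) * Real.exp (-u)) atTop (nhds 0) := by
      have e1 : Tendsto (fun u : ℝ => u * Real.exp (-u)) atTop (nhds 0) := by
        simpa using tendsto_pow_mul_exp_neg_atTop_nhds_zero 1
      have e2 : Tendsto (fun u : ℝ => Real.exp (-u)) atTop (nhds 0) :=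
        (Real.tendsto_exp_atBot).comp tendsto_neg_atTop_atBot
      have hsum : Tendsto (fun u : ℝ => (-(1 / (2 * b)) * (c * b + b ^ 2)) * Real.exp (-u)
            + (-(1 / (2 * b)) * b * b) * (u * Real.exp (-u))) atTop (nhds 0) := by
        have := (e2.const_mul (-(1 / (2 * b)) * (c * b + b ^ 2))).add
          (e1.const_mul (-(1 / (2 * b)) * b * b))
        simpa only [mul_zero, add_zero] using this
      exact hsum.congr fun u => by ring
    apply (h2.comp h1).congr
    intro z
    simp only [Function.comp, hF]
    rw [show b * (z / b) = z by field_simp, neg_div]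
  have hInt1 : ∫ z in Ioi (0:ℝ), (c + z) * (1 / (2 * b) * Real.exp (-z / b)) = c / 2 + b / 2 := by
    rw [integral_Ioi_of_hasDerivAt_of_nonneg' hFderiv
      (fun x hx => mul_nonneg (by simp only [mem_Ioi] at hx; linarith) (by positivity)) hFtend]
    simp [hF, F]
    field_simp
  have hIntOn1 : IntegrableOn (fun z : ℝ => (c + z) * (1 / (2 * b) * Real.exp (-z / b))) (Ioi 0) :=
    integrableOn_Ioi_deriv_of_nonneg' hFderiv (fun x hx => mul_nonneg (by simp only [mem_Ioi] at hx; linarith) (by positivity)) hFtend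
  -- Ioc piece
  have heq2 : EqOn (fun z : ℝ => (c + z) * (1 / (2 * b) * Real.exp (-|z| / b)))
      (fun z => (c + z) * (1 / (2 * b) * Real.exp (z / b))) (Ioc (-c) 0) := by
    intro z hz
    simp only
    rw [abs_of_nonpos hz.2, neg_neg]
  set G : ℝ → ℝ := fun z => (1 / (2 * b)) * ((c + z) * b - b ^ 2) * Real.exp (z / b) with hG
  have hGderiv : ∀ x : ℝ, HasDerivAt G ((c + x) * (1 / (2 * b) * Real.exp (x / b))) x := by
    intro x
    have h1 : HasDerivAt (fun z : ℝ => (1 / (2 * b)) * ((c + z) * b - b ^ 2)) ((1 / (2 * b)) * b) x := by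
      simpa using (((hasDerivAt_id x).const_add c).mul_const b |>.sub_const (b^2)).const_mul (1 / (2 * b))
    have h2 : HasDerivAt (fun z : ℝ => Real.exp (z / b)) (Real.exp (x / b) * (1 / b)) x := by
      have : HasDerivAt (fun z : ℝ => z / b) (1 / b) x := by
        simpa using (hasDerivAt_id x).div_const b
      exact (Real.hasDerivAt_exp (x / b)).comp x this
    have := h1.mul h2
    refine this.congr_deriv ?_
    field_simp
    ring
  have hcont : Continuous fun z : ℝ => (c + z) * (1 / (2 * b) * Real.exp (-|z| / b)) := by
    fun_prop
  have hInt2 : ∫ z in Ioc (-c) (0:ℝ), (c + z) * (1 / (2 * b) * Real.exp (z / b))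
      = c / 2 - b / 2 + b / 2 * Real.exp (-c / b) := by
    rw [← intervalIntegral.integral_of_le (by linarith : -c ≤ (0:ℝ))]
    rw [intervalIntegral.integral_eq_sub_of_hasDerivAt (fun x _ => hGderiv x)
      (Continuous.intervalIntegrable (by fun_prop) _ _)]
    simp only [hG]
    rw [show c + -c = 0 by ring]
    rw [show (-c) / b = -c / b by ring]
    field_simp
    rw [zero_div, Real.exp_zero]
    ring
  rw [hsplit, setIntegral_union (Ioc_disjoint_Ioi le_rfl) measurableSet_Ioi
    (hcont.integrableOn_Ioc) (hIntOn1.congr_fun heq.symm measurableSet_Ioi),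
    setIntegral_congr_fun measurableSet_Ioi heq,
    setIntegral_congr_fun measurableSet_Ioc heq2, hInt1, hInt2]
  ring

/-- For `Z ~ Laplace(0, b)` with `b > 0` and true count `c ≥ 0`, the bias of
the truncated mechanism equals `E[max(c + Z, 0)] - c = (b/2) exp(-c/b)`. In particular the
bias tends to 0 as `c → ∞` and equals `b/2` at `c = 0`. -/
theorem truncated_laplace_bias_formula (b : ℝ) (hb : 0 < b)
    (bias : ℝ → ℝ)
    (hbias : ∀ c : ℝ, bias c =
      (∫ z : ℝ, max (c + z) 0 * (1 / (2 * b) * Real.exp (-|z| / b))) - c) :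
    (∀ c : ℝ, 0 ≤ c → bias c = b / 2 * Real.exp (-c / b)) ∧
      Tendsto bias atTop (nhds 0) ∧
      bias 0 = b / 2 := by
  have hform : ∀ c : ℝ, 0 ≤ c → bias c = b / 2 * Real.exp (-c / b) := by
    intro c hc
    rw [hbias c, key b hb c hc]
    ring
  refine ⟨hform, ?_, ?_⟩
  · have h2 : Tendsto (fun c : ℝ => -c / b) atTop atBot := by
      have hd : Tendsto (fun c : ℝ => c / b) atTop atTop := tendsto_id.atTop_div_const hb
      exact (tendsto_neg_atTop_atBot.comp hd).congr fun c => by simp [Function.comp]; ring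
    have h1 : Tendsto (fun c : ℝ => b / 2 * Real.exp (-c / b)) atTop (nhds 0) := by
      have := (Real.tendsto_exp_atBot.comp h2).const_mul (b / 2)
      simpa using this
    apply Tendsto.congr' _ h1
    filter_upwards [eventually_ge_atTop (0:ℝ)] with c hc
    exact (hform c hc).symm
  · rw [hform 0 le_rfl]
    simp
end
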